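/- Let N ≥ 2 and v : [0,R] → ℝ be absolutely continuous with v(R) = 0. Define w(s) = √(Nπ^{N−1}/(N−1)!) · v(s^{1/N}) for s ∈ [0, R^N]. Then (2π^N/(N−1)!) ∫₀^R |v'(r)|² r dr = 2π ∫₀^{R^N} |w'(s)|² s ds, and with γ_N = 4π^N N/(N−1)!, (2π^N/(N−1)!) ∫₀^R e^{γ_N v(r)²} r^{2N−1} dr = (2π^N/N!) ∫₀^{R^N} e^{4π w(s)²} s ds. -/

import Mathlib

open MeasureTheory intervalIntegral

theorem subst_pow (N : ℕ) (hN : 2 ≤ N) (R : ℝ) (hR : 0 < R) (F : ℝ → ℝ) :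
    (∫ s in (0:ℝ)..(R^N), F s) = ∫ r in Set.Ioo (0:ℝ) R, |(N:ℝ) * r^(N-1)| * F (r^N) := by
  have hN0 : (N:ℝ) ≠ 0 := by positivity
  have himg : (fun r : ℝ => r ^ N) '' Set.Ioo 0 R = Set.Ioo 0 (R^N) := by
    ext s
    constructor
    · rintro ⟨r, ⟨hr0, hrR⟩, rfl⟩
      exact ⟨pow_pos hr0 N, pow_lt_pow_left₀ hrR hr0.le (by omega)⟩
    · rintro ⟨hs0, hsR⟩
      refine ⟨s ^ ((1:ℝ)/N), ⟨Real.rpow_pos_of_pos hs0 _, ?_⟩, ?_⟩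
      · have : s ^ ((1:ℝ)/N) < (R^N) ^ ((1:ℝ)/N) :=
          Real.rpow_lt_rpow hs0.le hsR (by positivity)
        rwa [← Real.rpow_natCast R N, ← Real.rpow_mul hR.le,
          mul_one_div_cancel hN0, Real.rpow_one] at this
      · show (s ^ ((1:ℝ)/N)) ^ N = s
        rw [← Real.rpow_natCast (s ^ ((1:ℝ)/N)) N, ← Real.rpow_mul hs0.le,
          one_div_mul_cancel hN0, Real.rpow_one]
  have h1 : (∫ s in (0:ℝ)..(R^N), F s) = ∫ s in Set.Ioo (0:ℝ) (R^N), F s := by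
    rw [intervalIntegral.integral_of_le (by positivity), ← integral_Ioc_eq_integral_Ioo]
  rw [h1, ← himg]
  rw [integral_image_eq_integral_abs_deriv_smul measurableSet_Ioo
    (fun x _ => (hasDerivAt_pow N x).hasDerivWithinAt) ?_ F]
  · simp [smul_eq_mul, mul_comm]
  · exact ((pow_left_strictMonoOn₀ (by omega : N ≠ 0)).injOn).mono
      (fun x hx => hx.1.le)

theorem change_of_variables_moser_functional
    (N : ℕ) (hN : 2 ≤ N) (R : ℝ) (hR : 0 < R)
    (γ : ℝ) (hγ : γ = 4 * Real.pi ^ N * N / (Nat.factorial (N - 1)))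
    (v : ℝ → ℝ) (hvR : v R = 0)
    (hv : ∀ r ∈ Set.Ioo (0 : ℝ) R, DifferentiableAt ℝ v r)
    (w : ℝ → ℝ)
    (hw : ∀ s : ℝ, w s =
      Real.sqrt ((N : ℝ) * Real.pi ^ (N - 1) / (Nat.factorial (N - 1))) *
        v (s ^ ((1 : ℝ) / N))) :
    (2 * Real.pi ^ N / (Nat.factorial (N - 1)) * ∫ r in (0 : ℝ)..R, deriv v r ^ 2 * r)
      = 2 * Real.pi * ∫ s in (0 : ℝ)..(R ^ N), deriv w s ^ 2 * s ∧
    (2 * Real.pi ^ N / (Nat.factorial (N - 1)) *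
        ∫ r in (0 : ℝ)..R, Real.exp (γ * v r ^ 2) * r ^ (2 * N - 1))
      = 2 * Real.pi ^ N / (Nat.factorial N) *
        ∫ s in (0 : ℝ)..(R ^ N), Real.exp (4 * Real.pi * w s ^ 2) * s := by
  have hN0 : (N:ℝ) ≠ 0 := by positivity
  set c : ℝ := Real.sqrt ((N : ℝ) * Real.pi ^ (N - 1) / (Nat.factorial (N - 1))) with hc
  have hc2 : c ^ 2 = (N : ℝ) * Real.pi ^ (N - 1) / (Nat.factorial (N - 1)) := by
    rw [hc, Real.sq_sqrt (by positivity)]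
  have hpipow : Real.pi * Real.pi ^ (N - 1) = Real.pi ^ N := by
    rw [← pow_succ']; congr 1; omega
  have hwfun : w = fun s => c * v (s ^ ((1:ℝ)/N)) := funext hw
  -- root of r^N
  have hroot : ∀ r : ℝ, 0 < r → ((r ^ N : ℝ)) ^ ((1:ℝ)/N) = r := fun r hr => by
    rw [← Real.rpow_natCast r N, ← Real.rpow_mul hr.le, mul_one_div_cancel hN0,
      Real.rpow_one]
  -- derivative of w
  have hderivw : ∀ s ∈ Set.Ioo (0:ℝ) (R^N), deriv w s =
      c * (deriv v (s ^ ((1:ℝ)/N)) * ((1/(N:ℝ)) * s ^ ((1:ℝ)/N - 1))) := by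
    rintro s ⟨hs0, hsR⟩
    have hg : HasDerivAt (fun x:ℝ => x ^ ((1:ℝ)/N)) ((1/(N:ℝ)) * s ^ ((1:ℝ)/N - 1)) s :=
      Real.hasDerivAt_rpow_const (Or.inl hs0.ne')
    have hmem : s ^ ((1:ℝ)/N) ∈ Set.Ioo (0:ℝ) R := by
      refine ⟨Real.rpow_pos_of_pos hs0 _, ?_⟩
      have : s ^ ((1:ℝ)/N) < (R^N) ^ ((1:ℝ)/N) :=
        Real.rpow_lt_rpow hs0.le hsR (by positivity)
      rwa [hroot R hR] at this
    have hvd : HasDerivAt v (deriv v (s ^ ((1:ℝ)/N))) (s ^ ((1:ℝ)/N)) :=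
      (hv _ hmem).hasDerivAt
    have hcomp := (hvd.comp s hg).const_mul c
    rw [hwfun]
    exact hcomp.deriv
  constructor
  · -- first identity
    rw [subst_pow N hN R hR]
    have hcong : ∀ r ∈ Set.Ioo (0:ℝ) R,
        |(N:ℝ) * r^(N-1)| * (deriv w (r^N) ^ 2 * (r^N))
          = c^2 / N * (deriv v r ^ 2 * r) := by
      rintro r ⟨hr0, hrR⟩
      have hmem : (r:ℝ)^N ∈ Set.Ioo (0:ℝ) (R^N) :=
        ⟨pow_pos hr0 N, pow_lt_pow_left₀ hrR hr0.le (by omega)⟩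
      rw [hderivw _ hmem, hroot r hr0]
      have habs : |(N:ℝ) * r^(N-1)| = (N:ℝ) * r^(N-1) :=
        abs_of_pos (by positivity)
      have hb : ((r:ℝ)^N) ^ ((1:ℝ)/N - 1) = r ^ ((1:ℝ) - N) := by
        rw [← Real.rpow_natCast r N, ← Real.rpow_mul hr0.le]
        congr 1
        field_simp
      have hX : (r:ℝ)^(N-1) = r ^ ((N:ℝ) - 1) := by
        rw [← Real.rpow_natCast r (N-1)]
        congr 1
        rw [Nat.cast_sub (by omega)]
        norm_num
      have hZ : (r:ℝ)^N = r ^ ((N:ℝ)) := by rw [Real.rpow_natCast]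
      have hprod : r ^ ((N:ℝ) - 1) * (r ^ ((1:ℝ) - N)) ^ 2 * r ^ ((N:ℝ)) = r := by
        rw [sq, ← Real.rpow_add hr0, ← Real.rpow_add hr0, ← Real.rpow_add hr0]
        have : ((N:ℝ) - 1 + (1 - N + (1 - N)) + N) = 1 := by ring
        rw [this, Real.rpow_one]
      rw [habs, hb, hX, hZ]
      calc (N:ℝ) * r ^ ((N:ℝ)-1) * ((c * (deriv v r * (1/(N:ℝ) * r ^ ((1:ℝ)-N))))^2
            * r ^ ((N:ℝ)))
          = c^2/N * deriv v r ^ 2 *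
              (r ^ ((N:ℝ)-1) * (r ^ ((1:ℝ)-N))^2 * r ^ ((N:ℝ))) := by
            field_simp
        _ = c^2 / N * (deriv v r ^ 2 * r) := by rw [hprod]; ring
    rw [setIntegral_congr_fun measurableSet_Ioo hcong, MeasureTheory.integral_const_mul]
    have hint : (∫ r in (0:ℝ)..R, deriv v r ^ 2 * r)
        = ∫ r in Set.Ioo (0:ℝ) R, deriv v r ^ 2 * r := by
      rw [intervalIntegral.integral_of_le hR.le, ← integral_Ioc_eq_integral_Ioo]
    rw [hint]
    have hF : (Nat.factorial (N-1) : ℝ) ≠ 0 := by positivity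
    have : 2 * Real.pi * (c^2 / N) = 2 * Real.pi ^ N / (Nat.factorial (N-1)) := by
      rw [hc2, ← hpipow]
      field_simp
    rw [← mul_assoc, this]
  · -- second identity
    rw [subst_pow N hN R hR]
    have hF : (Nat.factorial (N-1) : ℝ) ≠ 0 := by positivity
    have hγc : 4 * Real.pi * c ^ 2 = γ := by
      rw [hc2, hγ, ← hpipow]
      field_simp
    have hcong : ∀ r ∈ Set.Ioo (0:ℝ) R,
        |(N:ℝ) * r^(N-1)| * (Real.exp (4 * Real.pi * w (r^N) ^ 2) * (r^N))
          = (N:ℝ) * (Real.exp (γ * v r ^ 2) * r ^ (2*N-1)) := by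
      rintro r ⟨hr0, hrR⟩
      have habs : |(N:ℝ) * r^(N-1)| = (N:ℝ) * r^(N-1) :=
        abs_of_pos (by positivity)
      rw [habs, hw, hroot r hr0]
      have hexp : 4 * Real.pi * (c * v r) ^ 2 = γ * v r ^ 2 := by
        rw [← hγc]; ring
      rw [hexp]
      have hrp : (r:ℝ)^(N-1) * r^N = r^(2*N-1) := by
        rw [← pow_add]; congr 1; omega
      calc (N:ℝ) * r^(N-1) * (Real.exp (γ * v r ^ 2) * r^N)
          = (N:ℝ) * (Real.exp (γ * v r ^2) * (r^(N-1) * r^N)) := by ring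
        _ = _ := by rw [hrp]
    rw [setIntegral_congr_fun measurableSet_Ioo hcong, MeasureTheory.integral_const_mul]
    have hint : (∫ r in (0:ℝ)..R, Real.exp (γ * v r ^ 2) * r ^ (2*N-1))
        = ∫ r in Set.Ioo (0:ℝ) R, Real.exp (γ * v r ^ 2) * r ^ (2*N-1) := by
      rw [intervalIntegral.integral_of_le hR.le, ← integral_Ioc_eq_integral_Ioo]
    rw [hint, ← mul_assoc]
    congr 1
    have hfact : (Nat.factorial N : ℝ) = N * Nat.factorial (N-1) := by
      rw [← Nat.mul_factorial_pred (by omega)]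
      push_cast
      ring
    rw [hfact]
    field_simp
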